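/- Suppose E(Y|A,G,U)=β_a·A+β_g(U,G)+β_u(U) almost surely for a constant β_a, where β_g and β_u are measurable functions of (U,G) and U respectively, and suppose U is independent of A conditionally on G (no unmeasured confounding given G). Then for any bounded measurable function h, E[h(G)·{A−E(A|G)}·{Y−β_a·A}] = 0. -/

import Mathlib

open MeasureTheory ProbabilityTheory MeasurableSpace Filter Set
open scoped Topology

section Aux

variable {Ω : Type*} {mΩ : MeasurableSpace Ω} {μ : Measure Ω}

/-- bounded (everywhere) times integrable is integrable -/
lemma my_int_bdd_mul {φ g : Ω → ℝ} (hφ : AEStronglyMeasurable φ μ)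
    {C : ℝ} (hC : ∀ ω, ‖φ ω‖ ≤ C) (hg : Integrable g μ) :
    Integrable (fun ω => φ ω * g ω) μ :=
  hg.bdd_mul hφ (Filter.Eventually.of_forall hC)

/-- integrable of bounded measurable on finite measure -/
lemma my_int_of_bdd [IsFiniteMeasure μ] {φ : Ω → ℝ} (hφ : AEStronglyMeasurable φ μ)
    {C : ℝ} (hC : ∀ ω, ‖φ ω‖ ≤ C) : Integrable φ μ :=
  (MemLp.of_bound hφ C (Filter.Eventually.of_forall hC)).integrable le_rfl

/-- K1: weighting by an indicator of an `m`-measurable set commutes with condexp inside ∫ -/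
lemma my_K1 {m : MeasurableSpace Ω} (hm : m ≤ mΩ) [IsFiniteMeasure μ]
    {s : Set Ω} (hs : MeasurableSet[m] s) {φ : Ω → ℝ} (hφ : Integrable φ μ) :
    ∫ ω, s.indicator (fun _ => (1:ℝ)) ω * φ ω ∂μ
      = ∫ ω, s.indicator (fun _ => (1:ℝ)) ω * (μ[φ|m]) ω ∂μ := by
  have hsm : StronglyMeasurable[m] (s.indicator fun _ => (1:ℝ)) :=
    stronglyMeasurable_const.indicator hs
  have hbd : ∀ ω, ‖s.indicator (fun _ => (1:ℝ)) ω‖ ≤ 1 := by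
    intro ω; by_cases h : ω ∈ s <;> simp [Set.indicator_apply, h]
  have hint : Integrable (fun ω => s.indicator (fun _ => (1:ℝ)) ω * φ ω) μ :=
    my_int_bdd_mul ((hsm.mono hm).aestronglyMeasurable) hbd hφ
  have hpull := condExp_mul_of_stronglyMeasurable_left (μ := μ) hsm hint hφ
  calc ∫ ω, s.indicator (fun _ => (1:ℝ)) ω * φ ω ∂μ
      = ∫ ω, (μ[fun ω' => s.indicator (fun _ => (1:ℝ)) ω' * φ ω'|m]) ω ∂μ :=
        (integral_condExp hm).symm
    _ = ∫ ω, s.indicator (fun _ => (1:ℝ)) ω * (μ[φ|m]) ω ∂μ := integral_congr_ae hpull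

/-- Limit lemma: the identity `∫ v·ψ = ∫ v·E[ψ|m]` passes to dominated a.e. limits. -/
lemma my_lim2 {m : MeasurableSpace Ω} (hm : m ≤ mΩ) [IsFiniteMeasure μ]
    {v : Ω → ℝ} (hv : AEStronglyMeasurable[mΩ] v μ) {Cv : ℝ} (hvC : ∀ ω, ‖v ω‖ ≤ Cv)
    {ψs : ℕ → Ω → ℝ} {ψ : Ω → ℝ} {b : Ω → ℝ}
    (hmeas : ∀ n, AEStronglyMeasurable[mΩ] (ψs n) μ)
    (hb : Integrable b μ)
    (hbound : ∀ n, ∀ᵐ ω ∂μ, ‖ψs n ω‖ ≤ b ω)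
    (htend : ∀ᵐ ω ∂μ, Tendsto (fun n => ψs n ω) atTop (𝓝 (ψ ω)))
    (heq : ∀ n, ∫ ω, v ω * ψs n ω ∂μ = ∫ ω, v ω * (μ[ψs n|m]) ω ∂μ) :
    ∫ ω, v ω * ψ ω ∂μ = ∫ ω, v ω * (μ[ψ|m]) ω ∂μ := by
  set C' : ℝ := max Cv 0 with hC'
  have hC'0 : 0 ≤ C' := le_max_right _ _
  have hvC' : ∀ ω, ‖v ω‖ ≤ C' := fun ω => (hvC ω).trans (le_max_left _ _)
  have hψmeas : AEStronglyMeasurable[mΩ] ψ μ := aestronglyMeasurable_of_tendsto_ae atTop hmeas htend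
  have hψbound : ∀ᵐ ω ∂μ, ‖ψ ω‖ ≤ b ω := by
    filter_upwards [htend, ae_all_iff.2 hbound] with ω h1 h2
    exact le_of_tendsto h1.norm (Filter.Eventually.of_forall h2)
  have hψint : Integrable ψ μ := Integrable.mono' hb hψmeas hψbound
  have hψsint : ∀ n, Integrable (ψs n) μ := fun n => Integrable.mono' hb (hmeas n) (hbound n)
  have hb0 : ∀ᵐ ω ∂μ, 0 ≤ b ω := by
    filter_upwards [hbound 0] with ω h; exact (norm_nonneg _).trans h
  -- LHS tendsto
  have h1 : Tendsto (fun n => ∫ ω, v ω * ψs n ω ∂μ) atTop (𝓝 (∫ ω, v ω * ψ ω ∂μ)) := by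
    refine tendsto_integral_of_dominated_convergence (fun ω => C' * b ω)
      (fun n => hv.mul (hmeas n)) (hb.const_mul C') ?_ ?_
    · intro n
      filter_upwards [hbound n, hb0] with ω hω hbω
      rw [norm_mul]
      exact mul_le_mul (hvC' ω) hω (norm_nonneg _) hC'0
    · filter_upwards [htend] with ω hω
      exact hω.const_mul (v ω)
  -- RHS tendsto
  have hcondL1 : Tendsto (fun n => condExpL1 hm μ (ψs n)) atTop (𝓝 (condExpL1 hm μ ψ)) :=
    tendsto_condExpL1_of_dominated_convergence hm b hmeas hb hbound htend
  have hnorm0 : Tendsto (fun n => ‖condExpL1 hm μ (ψs n) - condExpL1 hm μ ψ‖) atTop (𝓝 0) :=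
    tendsto_iff_norm_sub_tendsto_zero.mp hcondL1
  have hgsm : ∀ n, AEStronglyMeasurable[mΩ] (fun ω => (μ[ψs n|m]) ω) μ :=
    fun n => (stronglyMeasurable_condExp.mono hm).aestronglyMeasurable
  have hgm : AEStronglyMeasurable[mΩ] (fun ω => (μ[ψ|m]) ω) μ :=
    (stronglyMeasurable_condExp.mono hm).aestronglyMeasurable
  have hintvgs : ∀ n, Integrable (fun ω => v ω * (μ[ψs n|m]) ω) μ :=
    fun n => my_int_bdd_mul hv hvC' integrable_condExp
  have hintvg : Integrable (fun ω => v ω * (μ[ψ|m]) ω) μ :=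
    my_int_bdd_mul hv hvC' integrable_condExp
  have hdiff_ae : ∀ n, (fun ω => (μ[ψs n|m]) ω - (μ[ψ|m]) ω)
      =ᵐ[μ] (condExpL1 hm μ (ψs n) - condExpL1 hm μ ψ : Lp ℝ 1 μ) := by
    intro n
    filter_upwards [condExp_ae_eq_condExpL1 hm (ψs n), condExp_ae_eq_condExpL1 hm ψ,
      Lp.coeFn_sub (condExpL1 hm μ (ψs n)) (condExpL1 hm μ ψ)] with ω e1 e2 e3
    rw [e3, Pi.sub_apply, e1, e2]
  have hkey : ∀ n, dist (∫ ω, v ω * (μ[ψs n|m]) ω ∂μ) (∫ ω, v ω * (μ[ψ|m]) ω ∂μ)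
      ≤ C' * ‖condExpL1 hm μ (ψs n) - condExpL1 hm μ ψ‖ := by
    intro n
    rw [Real.dist_eq, ← integral_sub (hintvgs n) hintvg]
    have e1 : (fun ω => v ω * (μ[ψs n|m]) ω - v ω * (μ[ψ|m]) ω)
        = fun ω => v ω * ((μ[ψs n|m]) ω - (μ[ψ|m]) ω) := by funext ω; ring
    rw [e1]
    calc |∫ ω, v ω * ((μ[ψs n|m]) ω - (μ[ψ|m]) ω) ∂μ|
        ≤ ∫ ω, ‖v ω * ((μ[ψs n|m]) ω - (μ[ψ|m]) ω)‖ ∂μ := by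
          simpa using norm_integral_le_integral_norm (μ := μ)
            (fun ω => v ω * ((μ[ψs n|m]) ω - (μ[ψ|m]) ω))
      _ ≤ ∫ ω, C' * ‖(μ[ψs n|m]) ω - (μ[ψ|m]) ω‖ ∂μ := by
          refine integral_mono ?_ ?_ ?_
          · exact (my_int_bdd_mul hv hvC' (integrable_condExp.sub integrable_condExp)).norm
          · exact ((integrable_condExp.sub integrable_condExp).norm.const_mul C')
          · intro ω
            simp only [norm_mul]
            exact mul_le_mul_of_nonneg_right (hvC' ω) (norm_nonneg _)
      _ = C' * ∫ ω, ‖(μ[ψs n|m]) ω - (μ[ψ|m]) ω‖ ∂μ := integral_const_mul _ _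
      _ = C' * ‖condExpL1 hm μ (ψs n) - condExpL1 hm μ ψ‖ := by
          rw [L1.norm_eq_integral_norm]
          congr 1
          refine integral_congr_ae ?_
          filter_upwards [hdiff_ae n] with ω e
          rw [← e]
  have h2 : Tendsto (fun n => ∫ ω, v ω * (μ[ψs n|m]) ω ∂μ) atTop
      (𝓝 (∫ ω, v ω * (μ[ψ|m]) ω ∂μ)) := by
    refine tendsto_iff_dist_tendsto_zero.mpr ?_
    refine squeeze_zero (fun n => dist_nonneg) hkey ?_
    simpa using hnorm0.const_mul C'
  have h2' : Tendsto (fun n => ∫ ω, v ω * ψs n ω ∂μ) atTop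
      (𝓝 (∫ ω, v ω * (μ[ψ|m]) ω ∂μ)) := h2.congr fun n => (heq n).symm
  exact tendsto_nhds_unique h1 h2'

lemma my_int_mul_bdd {g φ : Ω → ℝ} (hφ : AEStronglyMeasurable φ μ)
    {C : ℝ} (hC : ∀ ω, ‖φ ω‖ ≤ C) (hg : Integrable g μ) :
    Integrable (fun ω => g ω * φ ω) μ :=
  (my_int_bdd_mul hφ hC hg).congr (Filter.Eventually.of_forall fun ω => mul_comm _ _)

lemma my_ind_bd (q : Set Ω) (ω : Ω) : ‖q.indicator (fun _ => (1:ℝ)) ω‖ ≤ 1 := by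
  by_cases h : ω ∈ q <;> simp [Set.indicator_apply, h]

lemma my_core1 [IsProbabilityMeasure μ] {m' m₁ m₂ : MeasurableSpace Ω}
    (hm' : m' ≤ mΩ) (hm₁ : m₁ ≤ mΩ) (hm₂ : m₂ ≤ mΩ)
    (hSet : ∀ t ρ, MeasurableSet[m₁] t → MeasurableSet[m₂] ρ →
      (μ[(t ∩ ρ).indicator (fun _ => (1:ℝ))|m']) =ᵐ[μ]
        fun ω => (μ[t.indicator (fun _ => (1:ℝ))|m']) ω *
          (μ[ρ.indicator (fun _ => (1:ℝ))|m']) ω)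
    {s t ρ : Set Ω} (hs : MeasurableSet[m'] s) (ht : MeasurableSet[m₁] t)
    (hρ : MeasurableSet[m₂] ρ) :
    ∫ ω, (s ∩ t).indicator (fun _ => (1:ℝ)) ω * ρ.indicator (fun _ => (1:ℝ)) ω ∂μ
      = ∫ ω, (s ∩ t).indicator (fun _ => (1:ℝ)) ω *
          (μ[ρ.indicator (fun _ => (1:ℝ))|m']) ω ∂μ := by
  set Is : Ω → ℝ := s.indicator (fun _ => (1:ℝ)) with hIs
  set It : Ω → ℝ := t.indicator (fun _ => (1:ℝ)) with hIt
  set Iρ : Ω → ℝ := ρ.indicator (fun _ => (1:ℝ)) with hIρ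
  have hItm : AEStronglyMeasurable[mΩ] It μ :=
    (stronglyMeasurable_const.indicator (hm₁ t ht)).aestronglyMeasurable
  have hIρm : AEStronglyMeasurable[mΩ] Iρ μ :=
    (stronglyMeasurable_const.indicator (hm₂ ρ hρ)).aestronglyMeasurable
  have hItint : Integrable It μ := my_int_of_bdd hItm (my_ind_bd t)
  have hIρint : Integrable Iρ μ := my_int_of_bdd hIρm (my_ind_bd ρ)
  have hJρint : Integrable (fun ω => (μ[Iρ|m']) ω) μ := integrable_condExp
  have e0 : ∀ (ξ : Ω → ℝ) (ω), (s ∩ t).indicator (fun _ => (1:ℝ)) ω * ξ ω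
      = Is ω * (It ω * ξ ω) := by
    intro ξ ω
    by_cases h1 : ω ∈ s <;> by_cases h2 : ω ∈ t <;>
      simp [hIs, hIt, Set.indicator_apply, Set.mem_inter_iff, h1, h2]
  have e1 : (fun ω => It ω * Iρ ω) = (t ∩ ρ).indicator (fun _ => (1:ℝ)) := by
    funext ω
    by_cases h1 : ω ∈ t <;> by_cases h2 : ω ∈ ρ <;>
      simp [hIt, hIρ, Set.indicator_apply, Set.mem_inter_iff, h1, h2]
  -- LHS
  have lhs1 : ∫ ω, (s ∩ t).indicator (fun _ => (1:ℝ)) ω * Iρ ω ∂μ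
      = ∫ ω, Is ω * (μ[fun ω' => It ω' * Iρ ω'|m']) ω ∂μ := by
    rw [integral_congr_ae (Filter.Eventually.of_forall (fun ω => e0 Iρ ω))]
    exact my_K1 hm' hs (my_int_bdd_mul hItm (my_ind_bd t) hIρint)
  have lhs2 : ∫ ω, Is ω * (μ[fun ω' => It ω' * Iρ ω'|m']) ω ∂μ
      = ∫ ω, Is ω * ((μ[It|m']) ω * (μ[Iρ|m']) ω) ∂μ := by
    refine integral_congr_ae ?_
    have h := hSet t ρ ht hρ
    rw [← e1] at h
    filter_upwards [h] with ω hω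
    rw [hω]
  -- RHS
  have rhs1 : ∫ ω, (s ∩ t).indicator (fun _ => (1:ℝ)) ω * (μ[Iρ|m']) ω ∂μ
      = ∫ ω, Is ω * (μ[fun ω' => It ω' * (μ[Iρ|m']) ω'|m']) ω ∂μ := by
    rw [integral_congr_ae (Filter.Eventually.of_forall (fun ω => e0 (fun ω' => (μ[Iρ|m']) ω') ω))]
    exact my_K1 hm' hs (my_int_bdd_mul hItm (my_ind_bd t) hJρint)
  have rhs2 : (μ[fun ω' => It ω' * (μ[Iρ|m']) ω'|m']) =ᵐ[μ]
      fun ω => (μ[Iρ|m']) ω * (μ[It|m']) ω := by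
    have e3 : (fun ω' => It ω' * (μ[Iρ|m']) ω') = fun ω' => (μ[Iρ|m']) ω' * It ω' := by
      funext ω; exact mul_comm _ _
    rw [e3]
    exact condExp_mul_of_stronglyMeasurable_left stronglyMeasurable_condExp
      (my_int_mul_bdd hItm (my_ind_bd t) hJρint) hItint
  have rhs3 : ∫ ω, Is ω * (μ[fun ω' => It ω' * (μ[Iρ|m']) ω'|m']) ω ∂μ
      = ∫ ω, Is ω * ((μ[Iρ|m']) ω * (μ[It|m']) ω) ∂μ := by
    refine integral_congr_ae ?_
    filter_upwards [rhs2] with ω hω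
    rw [hω]
  rw [lhs1, lhs2, rhs1, rhs3]
  refine integral_congr_ae (Filter.Eventually.of_forall fun ω => ?_)
  ring

lemma my_Hst [IsProbabilityMeasure μ] {m' m₁ m₂ : MeasurableSpace Ω}
    (hm' : m' ≤ mΩ) (hm₁ : m₁ ≤ mΩ) (hm₂ : m₂ ≤ mΩ)
    (hSet : ∀ t ρ, MeasurableSet[m₁] t → MeasurableSet[m₂] ρ →
      (μ[(t ∩ ρ).indicator (fun _ => (1:ℝ))|m']) =ᵐ[μ]
        fun ω => (μ[t.indicator (fun _ => (1:ℝ))|m']) ω *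
          (μ[ρ.indicator (fun _ => (1:ℝ))|m']) ω)
    {W : Ω → ℝ} (hWm : StronglyMeasurable[m₂] W) (hWint : Integrable W μ)
    {s t : Set Ω} (hs : MeasurableSet[m'] s) (ht : MeasurableSet[m₁] t) :
    ∫ ω, (s ∩ t).indicator (fun _ => (1:ℝ)) ω * W ω ∂μ
      = ∫ ω, (s ∩ t).indicator (fun _ => (1:ℝ)) ω * (μ[W|m']) ω ∂μ := by
  set I : Ω → ℝ := (s ∩ t).indicator (fun _ => (1:ℝ)) with hI
  have hImeas : AEStronglyMeasurable[mΩ] I μ :=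
    (stronglyMeasurable_const.indicator ((hm' s hs).inter (hm₁ t ht))).aestronglyMeasurable
  have hIbd : ∀ ω, ‖I ω‖ ≤ 1 := my_ind_bd _
  set P : (Ω → ℝ) → Prop :=
    fun ψ => ∫ ω, I ω * ψ ω ∂μ = ∫ ω, I ω * (μ[ψ|m']) ω ∂μ with hPdef
  -- scaled indicators
  have hP0 : ∀ (c : ℝ) ⦃ρ : Set Ω⦄, MeasurableSet[m₂] ρ → P (ρ.indicator fun _ => c) := by
    intro c ρ hρ
    have base := my_core1 hm' hm₁ hm₂ hSet hs ht hρ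
    have ec : (ρ.indicator fun _ => c) = fun ω => c * ρ.indicator (fun _ => (1:ℝ)) ω := by
      funext ω; by_cases h : ω ∈ ρ <;> simp [Set.indicator_apply, h]
    have hsm : (μ[fun ω => c * ρ.indicator (fun _ => (1:ℝ)) ω|m']) =ᵐ[μ]
        fun ω => c * (μ[ρ.indicator (fun _ => (1:ℝ))|m']) ω := by
      have h := condExp_smul (μ := μ) (m := m') c (ρ.indicator fun _ => (1:ℝ))
      have e : c • (ρ.indicator fun _ => (1:ℝ)) = fun ω => c * ρ.indicator (fun _ => (1:ℝ)) ω :=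
        rfl
      rw [e] at h
      filter_upwards [h] with ω hω
      rw [hω]; rfl
    show ∫ ω, I ω * (ρ.indicator fun _ => c) ω ∂μ
        = ∫ ω, I ω * (μ[ρ.indicator fun _ => c|m']) ω ∂μ
    rw [ec]
    calc ∫ ω, I ω * (c * ρ.indicator (fun _ => (1:ℝ)) ω) ∂μ
        = c * ∫ ω, I ω * ρ.indicator (fun _ => (1:ℝ)) ω ∂μ := by
          rw [← integral_const_mul]
          exact integral_congr_ae (Filter.Eventually.of_forall fun ω => by ring)
      _ = c * ∫ ω, I ω * (μ[ρ.indicator (fun _ => (1:ℝ))|m']) ω ∂μ := by rw [base]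
      _ = ∫ ω, I ω * (μ[fun ω' => c * ρ.indicator (fun _ => (1:ℝ)) ω'|m']) ω ∂μ := by
          rw [← integral_const_mul]
          refine integral_congr_ae ?_
          filter_upwards [hsm] with ω hω
          rw [hω]; ring
  -- additivity
  have hPadd : ∀ ψ₁ ψ₂ : Ω → ℝ, Integrable ψ₁ μ → Integrable ψ₂ μ → P ψ₁ → P ψ₂ →
      P (fun ω => ψ₁ ω + ψ₂ ω) := by
    intro ψ₁ ψ₂ h₁ h₂ hp₁ hp₂
    have hadd : (μ[fun ω => ψ₁ ω + ψ₂ ω|m']) =ᵐ[μ] fun ω => (μ[ψ₁|m']) ω + (μ[ψ₂|m']) ω := by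
      have h := condExp_add (μ := μ) (m := m') h₁ h₂
      filter_upwards [h] with ω hω
      rw [show (fun ω => ψ₁ ω + ψ₂ ω) = ψ₁ + ψ₂ from rfl, hω]; rfl
    show ∫ ω, I ω * (ψ₁ ω + ψ₂ ω) ∂μ = ∫ ω, I ω * (μ[fun ω => ψ₁ ω + ψ₂ ω|m']) ω ∂μ
    calc ∫ ω, I ω * (ψ₁ ω + ψ₂ ω) ∂μ
        = ∫ ω, (I ω * ψ₁ ω + I ω * ψ₂ ω) ∂μ :=
          integral_congr_ae (Filter.Eventually.of_forall fun ω => by ring)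
      _ = (∫ ω, I ω * ψ₁ ω ∂μ) + ∫ ω, I ω * ψ₂ ω ∂μ :=
          integral_add (my_int_bdd_mul hImeas hIbd h₁) (my_int_bdd_mul hImeas hIbd h₂)
      _ = (∫ ω, I ω * (μ[ψ₁|m']) ω ∂μ) + ∫ ω, I ω * (μ[ψ₂|m']) ω ∂μ := by rw [hp₁, hp₂]
      _ = ∫ ω, (I ω * (μ[ψ₁|m']) ω + I ω * (μ[ψ₂|m']) ω) ∂μ :=
          (integral_add (my_int_bdd_mul hImeas hIbd integrable_condExp)
            (my_int_bdd_mul hImeas hIbd integrable_condExp)).symm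
      _ = ∫ ω, I ω * (μ[fun ω => ψ₁ ω + ψ₂ ω|m']) ω ∂μ := by
          refine integral_congr_ae ?_
          filter_upwards [hadd] with ω hω
          rw [hω]; ring
  -- simple functions
  have hPsimple : ∀ ψ : @SimpleFunc Ω m₂ ℝ, P ⇑ψ := by
    intro ψ
    refine @SimpleFunc.induction Ω ℝ m₂ _ (fun ψ => P ⇑ψ) ?_ ?_ ψ
    · intro c q hq
      have e : ⇑(@SimpleFunc.piecewise Ω ℝ m₂ q hq (SimpleFunc.const _ c) (SimpleFunc.const _ 0))
          = q.indicator (fun _ => c) := by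
        funext ω
        by_cases h : ω ∈ q <;> simp [SimpleFunc.piecewise_apply, Set.indicator_apply, h]
      rw [e]
      exact hP0 c hq
    · intro f g _ hf hg
      have hfint : Integrable (⇑f) μ := by
        obtain ⟨C, hC⟩ := f.exists_forall_norm_le
        exact my_int_of_bdd ((f.stronglyMeasurable.mono hm₂).aestronglyMeasurable) hC
      have hgint : Integrable (⇑g) μ := by
        obtain ⟨C, hC⟩ := g.exists_forall_norm_le
        exact my_int_of_bdd ((g.stronglyMeasurable.mono hm₂).aestronglyMeasurable) hC
      have e : ⇑(f + g) = fun ω => f ω + g ω := by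
        funext ω; simp
      rw [e]
      exact hPadd _ _ hfint hgint hf hg
  -- bounded m₂-strongly measurable
  have hPbdd : ∀ (ψ : Ω → ℝ) (C : ℝ), StronglyMeasurable[m₂] ψ → (∀ ω, ‖ψ ω‖ ≤ C) → P ψ := by
    intro ψ C hψm hψC
    set C' : ℝ := max C 0 with hC'
    have hC'0 : 0 ≤ C' := le_max_right _ _
    refine my_lim2 hm' hImeas hIbd
      (ψs := fun n => ⇑(hψm.approxBounded C' n)) (b := fun _ => C')
      (fun n => ((hψm.approxBounded C' n).stronglyMeasurable.mono hm₂).aestronglyMeasurable)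
      (integrable_const _) ?_ ?_ ?_
    · intro n
      exact Filter.Eventually.of_forall fun ω => hψm.norm_approxBounded_le hC'0 n ω
    · exact Filter.Eventually.of_forall fun ω =>
        hψm.tendsto_approxBounded_of_norm_le ((hψC ω).trans (le_max_left _ _))
    · intro n
      exact hPsimple _
  -- general integrable W
  show P W
  have hsmm : ∀ n : ℕ, StronglyMeasurable[m₂] (fun ω => max (min (W ω) n) (-(n:ℝ))) := by
    intro n
    exact ((hWm.measurable.min measurable_const).max measurable_const).stronglyMeasurable
  refine my_lim2 hm' hImeas hIbd
    (ψs := fun n ω => max (min (W ω) n) (-(n:ℝ))) (b := fun ω => ‖W ω‖)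
    (fun n => ((hsmm n).mono hm₂).aestronglyMeasurable) hWint.norm ?_ ?_ ?_
  · intro n
    refine Filter.Eventually.of_forall fun ω => ?_
    simp only [Real.norm_eq_abs]
    rw [abs_le]
    constructor
    · refine le_trans (le_min (neg_abs_le _) ?_) (le_max_left _ _)
      exact le_trans (neg_nonpos.mpr (abs_nonneg _)) (Nat.cast_nonneg n)
    · refine max_le ((min_le_left _ _).trans (le_abs_self _)) ?_
      exact le_trans (neg_nonpos.mpr (Nat.cast_nonneg n)) (abs_nonneg _)
  · refine Filter.Eventually.of_forall fun ω => ?_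
    have hev : ∀ᶠ n : ℕ in atTop, max (min (W ω) n) (-(n:ℝ)) = W ω := by
      rw [Filter.eventually_atTop]
      refine ⟨⌈|W ω|⌉₊, fun n hn => ?_⟩
      have hcast : |W ω| ≤ (n:ℝ) := le_trans (Nat.le_ceil _) (Nat.cast_le.mpr hn)
      rw [min_eq_left (le_trans (le_abs_self _) hcast),
        max_eq_left (le_trans (neg_le_neg hcast) (neg_abs_le _))]
    exact Filter.Tendsto.congr' (Filter.EventuallyEq.symm hev) tendsto_const_nhds
  · intro n
    refine hPbdd _ n (hsmm n) fun ω => ?_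
    simp only [Real.norm_eq_abs]
    rw [abs_le]
    constructor
    · exact le_max_right _ _
    · exact max_le (min_le_right _ _) (le_trans (neg_nonpos.mpr (Nat.cast_nonneg n))
        (Nat.cast_nonneg n))

lemma my_setIntegral_eq_indicator_mul {q : Set Ω} (hq : MeasurableSet q) (ξ : Ω → ℝ) :
    ∫ ω in q, ξ ω ∂μ = ∫ ω, q.indicator (fun _ => (1:ℝ)) ω * ξ ω ∂μ := by
  rw [← integral_indicator hq]
  refine integral_congr_ae (Filter.Eventually.of_forall fun ω => ?_)
  by_cases h : ω ∈ q <;> simp [Set.indicator_apply, h]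

lemma my_compl_step {q : Set Ω} (hq : MeasurableSet q) {f g : Ω → ℝ}
    (hf : Integrable f μ) (hg : Integrable g μ)
    (htot : ∫ ω, f ω ∂μ = ∫ ω, g ω ∂μ) (hqeq : ∫ ω in q, f ω ∂μ = ∫ ω in q, g ω ∂μ) :
    ∫ ω in qᶜ, f ω ∂μ = ∫ ω in qᶜ, g ω ∂μ := by
  rw [setIntegral_compl hq hf, setIntegral_compl hq hg, htot, hqeq]

lemma my_iUnion_step {g : ℕ → Set Ω} (hmeas : ∀ i, MeasurableSet (g i))
    (hdisj : Pairwise (Function.onFun Disjoint g)) {f₁ f₂ : Ω → ℝ}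
    (hf₁ : Integrable f₁ μ) (hf₂ : Integrable f₂ μ)
    (h : ∀ i, ∫ ω in g i, f₁ ω ∂μ = ∫ ω in g i, f₂ ω ∂μ) :
    ∫ ω in ⋃ i, g i, f₁ ω ∂μ = ∫ ω in ⋃ i, g i, f₂ ω ∂μ := by
  rw [integral_iUnion hmeas hdisj hf₁.integrableOn, integral_iUnion hmeas hdisj hf₂.integrableOn]
  exact tsum_congr h

lemma my_condexp_sup [IsProbabilityMeasure μ] {m' m₁ m₂ : MeasurableSpace Ω}
    (hm' : m' ≤ mΩ) (hm₁ : m₁ ≤ mΩ) (hm₂ : m₂ ≤ mΩ)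
    (hSet : ∀ t ρ, MeasurableSet[m₁] t → MeasurableSet[m₂] ρ →
      (μ[(t ∩ ρ).indicator (fun _ => (1:ℝ))|m']) =ᵐ[μ]
        fun ω => (μ[t.indicator (fun _ => (1:ℝ))|m']) ω *
          (μ[ρ.indicator (fun _ => (1:ℝ))|m']) ω)
    {W : Ω → ℝ} (hWm : StronglyMeasurable[m₂] W) (hWint : Integrable W μ) :
    (μ[W | m' ⊔ m₁]) =ᵐ[μ] μ[W | m'] := by
  have hsup : m' ⊔ m₁ ≤ mΩ := sup_le hm' hm₁
  set p : Set (Set Ω) :=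
    {q | ∃ s t, MeasurableSet[m'] s ∧ MeasurableSet[m₁] t ∧ q = s ∩ t} with hp
  have hgen : m' ⊔ m₁ = MeasurableSpace.generateFrom p := by
    refine le_antisymm (sup_le ?_ ?_) (MeasurableSpace.generateFrom_le ?_)
    · intro s hs
      exact measurableSet_generateFrom
        ⟨s, Set.univ, hs, MeasurableSet.univ, (Set.inter_univ s).symm⟩
    · intro t ht
      exact measurableSet_generateFrom
        ⟨Set.univ, t, MeasurableSet.univ, ht, (Set.univ_inter t).symm⟩
    · rintro q ⟨s, t, hs, ht, rfl⟩
      exact (le_sup_left (a := m') (b := m₁) s hs).inter (le_sup_right (a := m') (b := m₁) t ht)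
  have hpi : IsPiSystem p := by
    rintro q1 ⟨s1, t1, hs1, ht1, rfl⟩ q2 ⟨s2, t2, hs2, ht2, rfl⟩ _
    exact ⟨s1 ∩ s2, t1 ∩ t2, hs1.inter hs2, ht1.inter ht2, Set.inter_inter_inter_comm _ _ _ _⟩
  have hC : ∀ q, MeasurableSet[m' ⊔ m₁] q →
      ∫ ω in q, (μ[W|m']) ω ∂μ = ∫ ω in q, W ω ∂μ := by
    intro q hq
    refine MeasurableSpace.induction_on_inter (m := m' ⊔ m₁)
      (C := fun q _ => ∫ ω in q, (μ[W|m']) ω ∂μ = ∫ ω in q, W ω ∂μ) (s := p)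
      hgen hpi ?_ ?_ ?_ ?_ q hq
    · simp
    · rintro q ⟨s, t, hs, ht, rfl⟩
      have hmq : MeasurableSet[mΩ] (s ∩ t) := (hm' s hs).inter (hm₁ t ht)
      rw [my_setIntegral_eq_indicator_mul hmq, my_setIntegral_eq_indicator_mul hmq]
      exact (my_Hst hm' hm₁ hm₂ hSet hWm hWint hs ht).symm
    · intro q hq' hind
      have hqΩ : MeasurableSet[mΩ] q := hsup q hq'
      exact my_compl_step hqΩ integrable_condExp hWint (integral_condExp hm') hind
    · intro g hdisj hmeas hind
      exact my_iUnion_step (fun i => hsup _ (hmeas i)) hdisj integrable_condExp hWint hind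
  refine (ae_eq_condExp_of_forall_setIntegral_eq hsup hWint ?_ (fun q hq _ => hC q hq)
    ⟨μ[W|m'], stronglyMeasurable_condExp.mono le_sup_left, Filter.EventuallyEq.rfl⟩).symm
  exact fun q _ _ => (integrable_condExp (μ := μ) (m := m') (f := W)).restrict


end Aux

/-- σ-algebra generated by a random variable (term-level abbreviation to avoid
instance-candidate pollution in proofs). -/
def σc {Ω β : Type*} [mβ : MeasurableSpace β] (Z : Ω → β) : MeasurableSpace Ω :=
  MeasurableSpace.comap Z mβ


/-- Conditional expectation of the real random variable `X` given the σ-algebra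
generated by the random variable `Z`. -/
noncomputable def cExp {Ω β : Type*} [MeasurableSpace Ω] [mβ : MeasurableSpace β]
    (μ : Measure Ω) (Z : Ω → β) (X : Ω → ℝ) : Ω → ℝ :=
  μ[X | MeasurableSpace.comap Z mβ]

/-- Conditional covariance `cov(X, W | Z) = E(XW|Z) - E(X|Z)E(W|Z)`. -/
noncomputable def cCov {Ω β : Type*} [MeasurableSpace Ω] [mβ : MeasurableSpace β]
    (μ : Measure Ω) (Z : Ω → β) (X W : Ω → ℝ) : Ω → ℝ :=
  fun ω => cExp μ Z (fun ω' => X ω' * W ω') ω - cExp μ Z X ω * cExp μ Z W ω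

/-- Conditional variance `var(X | Z) = E(X²|Z) - E(X|Z)²`. -/
noncomputable def cVar {Ω β : Type*} [MeasurableSpace Ω] [mβ : MeasurableSpace β]
    (μ : Measure Ω) (Z : Ω → β) (X : Ω → ℝ) : Ω → ℝ :=
  fun ω => cExp μ Z (fun ω' => X ω' ^ 2) ω - (cExp μ Z X ω) ^ 2

/-- G-estimation under no unmeasured confounding given `G`.
If `E(Y|A,G,U) = β_a·A + β_g(U,G) + β_u(U)` a.s. for a constant `β_a` and `U ⫫ A | G`,
then for every bounded measurable `h`, `E[h(G)·{A−E(A|G)}·{Y−β_a·A}] = 0`. -/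
theorem stmt4 {Ω 𝓤 : Type*} [MeasurableSpace Ω] [StandardBorelSpace Ω] [Nonempty Ω]
    [MeasurableSpace 𝓤]
    (μ : Measure Ω) [IsProbabilityMeasure μ]
    (Y A G : Ω → ℝ) (U : Ω → 𝓤) (βa : ℝ)
    (βg : 𝓤 → ℝ → ℝ) (βu : 𝓤 → ℝ)
    (hYm : Measurable Y) (hAm : Measurable A) (hGm : Measurable G) (hUm : Measurable U)
    (hβgm : Measurable (Function.uncurry βg)) (hβum : Measurable βu)
    -- outcome model: E(Y|A,G,U) = β_a·A + β_g(U,G) + β_u(U) almost surely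
    (hout : cExp μ (fun ω => (A ω, G ω, U ω)) Y
        =ᵐ[μ] fun ω => βa * A ω + βg (U ω) (G ω) + βu (U ω))
    -- no unmeasured confounding given G: U ⫫ A | G
    (hCI : CondIndepFun (MeasurableSpace.comap G inferInstance) hGm.comap_le U A μ)
    -- all expectations appearing in the statement are assumed finite
    (hIntY : Integrable Y μ) (hIntA : Integrable A μ)
    (hIntA2 : Integrable (fun ω => (A ω) ^ 2) μ)
    (hIntAY : Integrable (fun ω => A ω * Y ω) μ)
    (hIntEAY : Integrable (fun ω => cExp μ G A ω * Y ω) μ)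
    (hIntEAA : Integrable (fun ω => cExp μ G A ω * A ω) μ) :
    ∀ h : ℝ → ℝ, Measurable h → (∃ C, ∀ x, |h x| ≤ C) →
      ∫ ω, h (G ω) * (A ω - cExp μ G A ω) * (Y ω - βa * A ω) ∂μ = 0 := by
  rintro h hhm ⟨C, hC⟩
  have hmG : σc G ≤ _ := hGm.comap_le
  have hmU : σc U ≤ _ := hUm.comap_le
  have hmA : σc A ≤ _ := hAm.comap_le
  have hm2 : σc (fun ω => (A ω, G ω, U ω)) ≤ _ := (hAm.prodMk (hGm.prodMk hUm)).comap_le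
  have hTm2 : Measurable[σc (fun ω => (A ω, G ω, U ω))] (fun ω => (A ω, G ω, U ω)) :=
    Measurable.of_comap_le le_rfl
  have hAm2 : Measurable[σc (fun ω => (A ω, G ω, U ω))] A := measurable_fst.comp hTm2
  have hGm2 : Measurable[σc (fun ω => (A ω, G ω, U ω))] G :=
    (measurable_fst.comp measurable_snd).comp hTm2
  have hUm2 : Measurable[σc (fun ω => (A ω, G ω, U ω))] U :=
    (measurable_snd.comp measurable_snd).comp hTm2
  have hmGm2 : σc G ≤ σc (fun ω => (A ω, G ω, U ω)) := hGm2.comap_le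
  have hhG_bd : ∀ ω, ‖h (G ω)‖ ≤ C := fun ω => by
    rw [Real.norm_eq_abs]; exact hC (G ω)
  have hhGm : AEStronglyMeasurable (fun ω => h (G ω)) μ := (hhm.comp hGm).aestronglyMeasurable
  have hRint : Integrable (fun ω => Y ω - βa * A ω) μ := hIntY.sub (hIntA.const_mul βa)
  have hEAm2 : StronglyMeasurable[σc (fun ω => (A ω, G ω, U ω))] (cExp μ G A) :=
    stronglyMeasurable_condExp.mono hmGm2
  -- Step S1 : E[R | A,G,U] = βg(U,G)+βu(U) =: f a.e.
  have hsub := condExp_sub (μ := μ) (m := σc (fun ω => (A ω, G ω, U ω)))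
    hIntY (hIntA.const_mul βa)
  have hAsm : (μ[fun ω => βa * A ω|σc (fun ω => (A ω, G ω, U ω))]) = fun ω => βa * A ω :=
    condExp_of_stronglyMeasurable hm2
      ((hAm2.const_mul βa).stronglyMeasurable) (hIntA.const_mul βa)
  have houtm2 : (μ[Y|σc (fun ω => (A ω, G ω, U ω))])
      =ᵐ[μ] fun ω => βa * A ω + βg (U ω) (G ω) + βu (U ω) := hout
  have hcond : (μ[fun ω => Y ω - βa * A ω|σc (fun ω => (A ω, G ω, U ω))])
      =ᵐ[μ] fun ω => βg (U ω) (G ω) + βu (U ω) := by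
    filter_upwards [hsub, houtm2] with ω h1 h2
    have e : (μ[fun ω => Y ω - βa * A ω|σc (fun ω => (A ω, G ω, U ω))]) ω
        = (μ[Y|σc (fun ω => (A ω, G ω, U ω))]) ω
          - (μ[fun ω => βa * A ω|σc (fun ω => (A ω, G ω, U ω))]) ω := by
      rw [show (fun ω => Y ω - βa * A ω) = (fun ω => Y ω) - fun ω => βa * A ω from rfl, h1]
      rfl
    rw [e, hAsm, h2]
    ring
  have hfint : Integrable (fun ω => βg (U ω) (G ω) + βu (U ω)) μ :=
    integrable_condExp.congr hcond
  -- integrability of (A - EA)·R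
  have hV : Integrable (fun ω => (A ω - cExp μ G A ω) * (Y ω - βa * A ω)) μ := by
    refine Integrable.congr
      (f := fun ω => (A ω * Y ω - βa * A ω ^ 2 - cExp μ G A ω * Y ω) + βa * (cExp μ G A ω * A ω))
      (((hIntAY.sub (hIntA2.const_mul βa)).sub hIntEAY).add (hIntEAA.const_mul βa)) ?_
    exact Filter.Eventually.of_forall fun ω => by ring
  have hWR_int : Integrable
      (fun ω => (h (G ω) * (A ω - cExp μ G A ω)) * (Y ω - βa * A ω)) μ := by
    refine Integrable.congr
      (f := fun ω => h (G ω) * ((A ω - cExp μ G A ω) * (Y ω - βa * A ω)))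
      (my_int_bdd_mul hhGm hhG_bd hV) ?_
    exact Filter.Eventually.of_forall fun ω => by ring
  have hWm2 : StronglyMeasurable[σc (fun ω => (A ω, G ω, U ω))]
      (fun ω => h (G ω) * (A ω - cExp μ G A ω)) :=
    ((hhm.comp hGm2).mul (hAm2.sub hEAm2.measurable)).stronglyMeasurable
  -- Step S2 : ∫ W R = ∫ W f
  have hS2 : ∫ ω, (h (G ω) * (A ω - cExp μ G A ω)) * (Y ω - βa * A ω) ∂μ
      = ∫ ω, (h (G ω) * (A ω - cExp μ G A ω)) * (βg (U ω) (G ω) + βu (U ω)) ∂μ := by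
    have hpull := condExp_mul_of_stronglyMeasurable_left (μ := μ) hWm2 hWR_int hRint
    rw [← integral_condExp hm2
      (f := fun ω => (h (G ω) * (A ω - cExp μ G A ω)) * (Y ω - βa * A ω))]
    refine integral_congr_ae ?_
    filter_upwards [hpull, hcond] with ω h1 h2
    rw [show (μ[fun ω => (h (G ω) * (A ω - cExp μ G A ω)) * (Y ω - βa * A ω)|
        σc (fun ω => (A ω, G ω, U ω))])
      = μ[(fun ω => h (G ω) * (A ω - cExp μ G A ω)) * fun ω => Y ω - βa * A ω|
        σc (fun ω => (A ω, G ω, U ω))] from rfl, h1, Pi.mul_apply, h2]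
  -- Integrability of A·f and EA·f
  have hARint : Integrable (fun ω => A ω * (Y ω - βa * A ω)) μ := by
    refine Integrable.congr (f := fun ω => A ω * Y ω - βa * A ω ^ 2)
      (hIntAY.sub (hIntA2.const_mul βa)) ?_
    exact Filter.Eventually.of_forall fun ω => by ring
  have hAf : Integrable (fun ω => A ω * (βg (U ω) (G ω) + βu (U ω))) μ := by
    have hpull := condExp_mul_of_stronglyMeasurable_left (μ := μ) hAm2.stronglyMeasurable hARint hRint
    refine integrable_condExp.congr
      (f := μ[fun ω => A ω * (Y ω - βa * A ω)|σc (fun ω => (A ω, G ω, U ω))]) ?_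
    filter_upwards [hpull, hcond] with ω h1 h2
    rw [show (μ[fun ω => A ω * (Y ω - βa * A ω)|σc (fun ω => (A ω, G ω, U ω))])
      = μ[A * fun ω => Y ω - βa * A ω|σc (fun ω => (A ω, G ω, U ω))] from rfl, h1,
      Pi.mul_apply, h2]
  have hEARint : Integrable (fun ω => cExp μ G A ω * (Y ω - βa * A ω)) μ := by
    refine Integrable.congr (f := fun ω => cExp μ G A ω * Y ω - βa * (cExp μ G A ω * A ω))
      (hIntEAY.sub (hIntEAA.const_mul βa)) ?_
    exact Filter.Eventually.of_forall fun ω => by ring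
  have hEAf : Integrable (fun ω => cExp μ G A ω * (βg (U ω) (G ω) + βu (U ω))) μ := by
    have hpull := condExp_mul_of_stronglyMeasurable_left (μ := μ) hEAm2 hEARint hRint
    refine integrable_condExp.congr
      (f := μ[fun ω => cExp μ G A ω * (Y ω - βa * A ω)|σc (fun ω => (A ω, G ω, U ω))]) ?_
    filter_upwards [hpull, hcond] with ω h1 h2
    rw [show (μ[fun ω => cExp μ G A ω * (Y ω - βa * A ω)|σc (fun ω => (A ω, G ω, U ω))])
      = μ[cExp μ G A * fun ω => Y ω - βa * A ω|σc (fun ω => (A ω, G ω, U ω))] from rfl, h1,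
      Pi.mul_apply, h2]
  -- X := h(G)·f
  have hXA_int : Integrable
      (fun ω => (h (G ω) * (βg (U ω) (G ω) + βu (U ω))) * A ω) μ := by
    refine Integrable.congr (f := fun ω => h (G ω) * (A ω * (βg (U ω) (G ω) + βu (U ω))))
      (my_int_bdd_mul hhGm hhG_bd hAf) ?_
    exact Filter.Eventually.of_forall fun ω => by ring
  have hXEA_int : Integrable
      (fun ω => (h (G ω) * (βg (U ω) (G ω) + βu (U ω))) * cExp μ G A ω) μ := by
    refine Integrable.congr
      (f := fun ω => h (G ω) * (cExp μ G A ω * (βg (U ω) (G ω) + βu (U ω))))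
      (my_int_bdd_mul hhGm hhG_bd hEAf) ?_
    exact Filter.Eventually.of_forall fun ω => by ring
  -- conditional independence: tower property
  have hSet : ∀ t ρ, MeasurableSet[σc U] t → MeasurableSet[σc A] ρ →
      (μ[(t ∩ ρ).indicator (fun _ => (1:ℝ))|σc G]) =ᵐ[μ]
        fun ω => (μ[t.indicator (fun _ => (1:ℝ))|σc G]) ω *
          (μ[ρ.indicator (fun _ => (1:ℝ))|σc G]) ω := by
    intro t ρ ht hρ
    obtain ⟨τ, hτ, rfl⟩ := ht
    obtain ⟨ρ', hρ', rfl⟩ := hρ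
    exact (condIndepFun_iff_condExp_inter_preimage_eq_mul hUm hAm).mp hCI τ ρ' hτ hρ'
  have hAmA : StronglyMeasurable[σc A] A := (Measurable.of_comap_le le_rfl).stronglyMeasurable
  have hTower : (μ[A|σc G ⊔ σc U]) =ᵐ[μ] μ[A|σc G] :=
    my_condexp_sup hmG hmU hmA hSet hAmA hIntA
  -- Step S4 : ∫ X·A = ∫ X·EA
  have hGm1 : Measurable[σc G ⊔ σc U] G := Measurable.of_comap_le le_sup_left
  have hUm1 : Measurable[σc G ⊔ σc U] U := Measurable.of_comap_le le_sup_right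
  have hXm1 : StronglyMeasurable[σc G ⊔ σc U]
      (fun ω => h (G ω) * (βg (U ω) (G ω) + βu (U ω))) :=
    ((hhm.comp hGm1).mul
      ((hβgm.comp (hUm1.prodMk hGm1)).add (hβum.comp hUm1))).stronglyMeasurable
  have hS4 : ∫ ω, (h (G ω) * (βg (U ω) (G ω) + βu (U ω))) * A ω ∂μ
      = ∫ ω, (h (G ω) * (βg (U ω) (G ω) + βu (U ω))) * cExp μ G A ω ∂μ := by
    have hpull := condExp_mul_of_stronglyMeasurable_left (μ := μ) hXm1 hXA_int hIntA
    rw [← integral_condExp (sup_le hmG hmU)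
      (f := fun ω => (h (G ω) * (βg (U ω) (G ω) + βu (U ω))) * A ω)]
    refine integral_congr_ae ?_
    filter_upwards [hpull, hTower] with ω h1 h2
    rw [show (μ[fun ω => (h (G ω) * (βg (U ω) (G ω) + βu (U ω))) * A ω|σc G ⊔ σc U])
      = μ[(fun ω => h (G ω) * (βg (U ω) (G ω) + βu (U ω))) * A|σc G ⊔ σc U] from rfl, h1,
      Pi.mul_apply, h2]
    rfl
  -- conclusion
  calc ∫ ω, h (G ω) * (A ω - cExp μ G A ω) * (Y ω - βa * A ω) ∂μ
      = ∫ ω, (h (G ω) * (A ω - cExp μ G A ω)) * (βg (U ω) (G ω) + βu (U ω)) ∂μ := hS2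
    _ = ∫ ω, ((h (G ω) * (βg (U ω) (G ω) + βu (U ω))) * A ω
          - (h (G ω) * (βg (U ω) (G ω) + βu (U ω))) * cExp μ G A ω) ∂μ := by
        refine integral_congr_ae (Filter.Eventually.of_forall fun ω => ?_)
        ring
    _ = (∫ ω, (h (G ω) * (βg (U ω) (G ω) + βu (U ω))) * A ω ∂μ)
          - ∫ ω, (h (G ω) * (βg (U ω) (G ω) + βu (U ω))) * cExp μ G A ω ∂μ :=
        integral_sub hXA_int hXEA_int
    _ = 0 := by rw [hS4, sub_self]
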